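/- Let β > 0, r ∈ [0,1), and define T(x) = x(β + r x)/(β + x) for x > 0. Given b > 0, set c = (1 - r)/(β + r/b). Then for all k ≥ 0, T(1/(ck + b)) ≤ 1/(c(k+1) + b). -/

import Mathlib

theorem stmt_10 (β r b c : ℝ) (hβ : 0 < β) (hr0 : 0 ≤ r) (hr1 : r < 1)
    (hb : 0 < b) (hc : c = (1 - r) / (β + r / b))
    (T : ℝ → ℝ) (hT : ∀ x, T x = x * (β + r * x) / (β + x)) :
    ∀ k : ℕ, T (1 / (c * k + b)) ≤ 1 / (c * (k + 1) + b) := by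
  intro k
  have hβb : 0 < β + r / b := by positivity
  have hc0 : 0 < c := by rw [hc]; apply div_pos (by linarith) hβb
  have hk : (0:ℝ) ≤ (k:ℝ) := Nat.cast_nonneg k
  have hy : 0 < c * k + b := by positivity
  have key : c * (β + r / b) = 1 - r := by
    rw [hc]; field_simp
  have key2 : c * (β * b + r) = (1 - r) * b := by
    have := key
    field_simp at this
    linarith [this]
  have hyne : c * (k:ℝ) + b ≠ 0 := ne_of_gt hy
  have e1 : 1 / (c * k + b) * (β + r * (1 / (c * k + b))) / (β + 1 / (c * k + b))
      = (β * (c * k + b) + r) / ((c * k + b) * (β * (c * k + b) + 1)) := by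
    field_simp
  rw [hT, e1, div_le_div_iff₀ (by positivity) (by positivity)]
  nlinarith [key2, mul_nonneg (mul_nonneg (mul_nonneg hr0 hc0.le) hc0.le) hk,
    mul_pos hy hb, mul_pos hy hy, mul_nonneg (mul_nonneg hr0 hc0.le) hk,
    mul_pos hb hc0]
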